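/- Let J = J₀ ⊕ J₁ be a nilpotent Jordan superalgebra over ℂ with dim J₁ = 3 and with J₀ two-dimensional, spanned by even elements e₁, e₂ satisfying e₁² = e₂ and e₁e₂ = e₂² = 0. Then the restricted left multiplication operators l_{e₁}, l_{e₂} on J₁ (given by l_x(f) = x·f) satisfy l_{e₁} ∘ l_{e₂} = l_{e₂} ∘ l_{e₁} = 0, i.e. e₁(e₂f) = 0 and e₂(e₁f) = 0 for all f ∈ J₁. -/
import Mathlib


noncomputable section

/-- The underlying ℤ/2-graded vector space of type `(m,n)`: even part `Fin m → ℂ`,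
odd part `Fin n → ℂ`. -/
abbrev GV (m n : ℕ) : Type := (Fin m → ℂ) × (Fin n → ℂ)

/-- A superalgebra structure tensor of type `(m,n)`: structure constants
`c i j k` (even·even), `ρ i j k` (even·odd) and `Γ i j k` (odd·odd). -/
abbrev Tensor (m n : ℕ) : Type :=
  (Fin m → Fin m → Fin m → ℂ) × (Fin m → Fin n → Fin n → ℂ) × (Fin n → Fin n → Fin m → ℂ)

/-- The ℤ/2-graded multiplication on `GV m n` determined by a structure tensor. -/
def mulOf {m n : ℕ} (μ : Tensor m n) (x y : GV m n) : GV m n :=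
  (fun k => (∑ i, ∑ j, x.1 i * y.1 j * μ.1 i j k) + ∑ i, ∑ j, x.2 i * y.2 j * μ.2.2 i j k,
   fun k => (∑ i, ∑ j, x.1 i * y.2 j * μ.2.1 i j k) + ∑ i, ∑ j, y.1 i * x.2 j * μ.2.1 i j k)

/-- `x` is homogeneous of parity `p` (`p = 0`: even, `p = 1`: odd). -/
def IsHom {m n : ℕ} (p : ℕ) (x : GV m n) : Prop :=
  (p = 0 ∧ x.2 = 0) ∨ (p = 1 ∧ x.1 = 0)

/-- The sign `(-1)^k`. -/
def sgn (k : ℕ) : ℂ := (-1 : ℂ) ^ k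

/-- The super-Jordan expression `J^s(w; x, y, z)` for homogeneous elements of
parities `pw, px, py, pz`. -/
def superJ {m n : ℕ} (μ : Tensor m n) (pw px py pz : ℕ) (w x y z : GV m n) : GV m n :=
  mulOf μ (mulOf μ w x) (mulOf μ y z)
    + sgn (px * py) • mulOf μ (mulOf μ w y) (mulOf μ x z)
    + sgn ((px + py) * pz) • mulOf μ (mulOf μ w z) (mulOf μ x y)
    - sgn (pw * px) • mulOf μ x (mulOf μ w (mulOf μ y z))
    - sgn (py * (pw + px)) • mulOf μ y (mulOf μ w (mulOf μ x z))
    - sgn (pz * (pw + px + py)) • mulOf μ z (mulOf μ w (mulOf μ x y))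

/-- `μ` is a Jordan superalgebra structure: supercommutativity and the Jordan
superidentity hold for all homogeneous elements. -/
def IsJordanSuper {m n : ℕ} (μ : Tensor m n) : Prop :=
  (∀ (px py : ℕ) (x y : GV m n), IsHom px x → IsHom py y →
      mulOf μ x y = sgn (px * py) • mulOf μ y x) ∧
  (∀ (pw px py pz : ℕ) (w x y z : GV m n),
      IsHom pw w → IsHom px x → IsHom py y → IsHom pz z →
      superJ μ pw px py pz w x y z = 0)

/-- The product of two graded subspaces: the span of all products. -/
def mulSub {m n : ℕ} (μ : Tensor m n) (A B : Submodule ℂ (GV m n)) : Submodule ℂ (GV m n) :=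
  Submodule.span ℂ {z | ∃ a ∈ A, ∃ b ∈ B, z = mulOf μ a b}

/-- The powers `J^k`: `J^1 = J` and `J^{k+1} = Σ_{i=1}^{k} J^i · J^{k+1-i}`. -/
def powT {m n : ℕ} (μ : Tensor m n) : ℕ → Submodule ℂ (GV m n)
  | 0 => ⊤
  | 1 => ⊤
  | (k + 2) => ⨆ i : Fin (k + 1), mulSub μ (powT μ ((i : ℕ) + 1)) (powT μ (k + 1 - (i : ℕ)))
  decreasing_by
  · have := i.isLt; omega
  · omega

/-- `μ` is nilpotent: some power vanishes. -/
def IsNilpotentT {m n : ℕ} (μ : Tensor m n) : Prop :=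
  ∃ k : ℕ, 1 ≤ k ∧ powT μ k = ⊥

/-- A grading-preserving algebra isomorphism between the superalgebras determined
by `μ` and `μ'`. -/
def Iso {m n : ℕ} (μ μ' : Tensor m n) : Prop :=
  ∃ (T : (Fin m → ℂ) ≃ₗ[ℂ] (Fin m → ℂ)) (S : (Fin n → ℂ) ≃ₗ[ℂ] (Fin n → ℂ)),
    ∀ x y : GV m n,
      (T ((mulOf μ x y).1), S ((mulOf μ x y).2)) = mulOf μ' (T x.1, S x.2) (T y.1, S y.2)

/-- `μ` degenerates to `μ'`: `μ'` lies in the closure of the orbit of `μ` under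
base change (in the standard topology). -/
def degenerates {m n : ℕ} (μ μ' : Tensor m n) : Prop :=
  μ' ∈ closure {ν : Tensor m n | Iso μ ν}

/-- Standard even basis vector `e_i`. -/
def eps {m n : ℕ} (i : Fin m) : GV m n := (Pi.single i 1, 0)

/-- Standard odd basis vector `f_j`. -/
def ph {m n : ℕ} (j : Fin n) : GV m n := (0, Pi.single j 1)



def rmat (μ : Tensor 2 3) (i : Fin 2) : Matrix (Fin 3) (Fin 3) ℂ :=
  Matrix.of fun j k => μ.2.1 i j k

lemma mul_eps_odd (μ : Tensor 2 3) (i : Fin 2) (u : Fin 3 → ℂ) :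
    mulOf μ (eps i) ((0 : Fin 2 → ℂ), u) = ((0 : Fin 2 → ℂ), Matrix.vecMul u (rmat μ i)) := by
  refine Prod.ext ?_ ?_ <;> funext k <;>
    simp [mulOf, eps, rmat, Matrix.vecMul, dotProduct, Pi.single_apply, ite_mul,
      Finset.sum_ite_eq', mul_comm]

lemma mul_odd_eps (μ : Tensor 2 3) (i : Fin 2) (u : Fin 3 → ℂ) :
    mulOf μ ((0 : Fin 2 → ℂ), u) (eps i) = ((0 : Fin 2 → ℂ), Matrix.vecMul u (rmat μ i)) := by
  refine Prod.ext ?_ ?_ <;> funext k <;>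
    simp [mulOf, eps, rmat, Matrix.vecMul, dotProduct, Pi.single_apply, ite_mul,
      Finset.sum_ite_eq', mul_comm]

lemma mulOf_zero' (μ : Tensor 2 3) (x : GV 2 3) : mulOf μ x 0 = 0 := by
  refine Prod.ext ?_ ?_ <;> funext k <;> simp [mulOf]

lemma zero_mulOf' (μ : Tensor 2 3) (x : GV 2 3) : mulOf μ 0 x = 0 := by
  refine Prod.ext ?_ ?_ <;> funext k <;> simp [mulOf]

lemma vm_cancel {X Y : Matrix (Fin 3) (Fin 3) ℂ}
    (h : ∀ u : Fin 3 → ℂ, Matrix.vecMul u X = Matrix.vecMul u Y) : X = Y := by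
  ext j k
  have := congrFun (h (Pi.single j 1)) k
  simpa [Matrix.vecMul, dotProduct, Pi.single_apply, ite_mul, Finset.sum_ite_eq'] using this

lemma double_zero {X : Matrix (Fin 3) (Fin 3) ℂ} (h : X + X = 0) : X = 0 := by
  ext j k
  have h' := congrFun (congrFun h j) k
  simp only [Matrix.add_apply, Matrix.zero_apply] at h' ⊢
  linear_combination h' / 2

lemma hom_eps (i : Fin 2) : IsHom 0 (eps (m := 2) (n := 3) i) := Or.inl ⟨rfl, rfl⟩
lemma hom_odd (u : Fin 3 → ℂ) : IsHom 1 (((0 : Fin 2 → ℂ), u) : GV 2 3) := Or.inr ⟨rfl, rfl⟩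

/-- in a nilpotent Jordan superalgebra of type (2,3) with even part
satisfying `e₁² = e₂`, `e₁e₂ = e₂² = 0`, the restricted left multiplications by
`e₁` and `e₂` on the odd part compose to zero in both orders. -/
theorem stmt10 (μ : Tensor 2 3) (hJ : IsJordanSuper μ) (hN : IsNilpotentT μ)
    (h11 : mulOf μ (eps 0) (eps 0) = eps 1)
    (h12 : mulOf μ (eps 0) (eps 1) = 0)
    (h22 : mulOf μ (eps 1) (eps 1) = 0) :
    ∀ u : Fin 3 → ℂ,
      mulOf μ (eps 0) (mulOf μ (eps 1) ((0 : Fin 2 → ℂ), u)) = 0 ∧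
      mulOf μ (eps 1) (mulOf μ (eps 0) ((0 : Fin 2 → ℂ), u)) = 0 := by

  -- abbreviations
  set A := rmat μ 0 with hA
  set B := rmat μ 1 with hB
  -- supercommutativity gives e₂e₁ = 0
  have h21 : mulOf μ (eps 1) (eps 0) = 0 := by
    have := hJ.1 0 0 (eps 1) (eps 0) (hom_eps 1) (hom_eps 0)
    simpa [sgn, h12] using this
  -- Equation (1): 3 BA = 2 A³  (w=x=y=e₁, z=f)
  have e1 : A * B + A * B + A * B = A * A * A + A * A * A := by
    apply vm_cancel; intro u
    have h := hJ.2 0 0 0 1 (eps 0) (eps 0) (eps 0) ((0 : Fin 2 → ℂ), u)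
      (hom_eps 0) (hom_eps 0) (hom_eps 0) (hom_odd u)
    simp only [superJ, sgn, add_zero, zero_add, mul_one, one_mul, mul_zero, zero_mul,
      pow_zero, one_smul, smul_zero, h11, h12, h22, h21,
      mul_eps_odd, mul_odd_eps, mulOf_zero', zero_mulOf', Matrix.vecMul_vecMul] at h
    have h2 := congrArg Prod.snd h
    simp only [Prod.snd_add, Prod.snd_sub, Prod.snd_zero] at h2
    funext k
    have h3 := congrFun h2 k
    simp only [Pi.add_apply, Pi.sub_apply, Pi.zero_apply, Matrix.vecMul_add,
      Matrix.vecMul_vecMul] at h3 ⊢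
    linear_combination h3
  -- Equation (2): AB = BA  (w=f, x=y=z=e₁)
  have e2 : A * B = B * A := by
    apply vm_cancel; intro u
    have h := hJ.2 1 0 0 0 ((0 : Fin 2 → ℂ), u) (eps 0) (eps 0) (eps 0)
      (hom_odd u) (hom_eps 0) (hom_eps 0) (hom_eps 0)
    simp only [superJ, sgn, add_zero, zero_add, mul_one, one_mul, mul_zero, zero_mul,
      pow_zero, one_smul, smul_zero, h11, h12, h22, h21,
      mul_eps_odd, mul_odd_eps, mulOf_zero', zero_mulOf', Matrix.vecMul_vecMul] at h
    have h2 := congrArg Prod.snd h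
    simp only [Prod.snd_add, Prod.snd_sub, Prod.snd_zero] at h2
    funext k
    have h3 := congrFun h2 k
    simp only [Pi.add_apply, Pi.sub_apply, Pi.zero_apply, Matrix.vecMul_add,
      Matrix.vecMul_vecMul] at h3 ⊢
    linear_combination h3 / 3
  -- Equation (3): B² = 2 ABA  (w=e₂, x=y=e₁, z=f)
  have e3 : B * B = A * B * A + A * B * A := by
    apply vm_cancel; intro u
    have h := hJ.2 0 0 0 1 (eps 1) (eps 0) (eps 0) ((0 : Fin 2 → ℂ), u)
      (hom_eps 1) (hom_eps 0) (hom_eps 0) (hom_odd u)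
    simp only [superJ, sgn, add_zero, zero_add, mul_one, one_mul, mul_zero, zero_mul,
      pow_zero, one_smul, smul_zero, h11, h12, h22, h21,
      mul_eps_odd, mul_odd_eps, mulOf_zero', zero_mulOf', Matrix.vecMul_vecMul] at h
    have h2 := congrArg Prod.snd h
    simp only [Prod.snd_add, Prod.snd_sub, Prod.snd_zero] at h2
    funext k
    have h3 := congrFun h2 k
    simp only [Pi.add_apply, Pi.sub_apply, Pi.zero_apply, Matrix.vecMul_add,
      Matrix.vecMul_vecMul] at h3 ⊢
    linear_combination h3
  -- Equation (4): AB² + B²A = 0  (w=x=e₂, y=e₁, z=f)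
  have e4 : A * B * B + B * B * A = 0 := by
    apply vm_cancel; intro u
    have h := hJ.2 0 0 0 1 (eps 1) (eps 1) (eps 0) ((0 : Fin 2 → ℂ), u)
      (hom_eps 1) (hom_eps 1) (hom_eps 0) (hom_odd u)
    simp only [superJ, sgn, add_zero, zero_add, mul_one, one_mul, mul_zero, zero_mul,
      pow_zero, one_smul, smul_zero, h11, h12, h22, h21,
      mul_eps_odd, mul_odd_eps, mulOf_zero', zero_mulOf', Matrix.vecMul_vecMul] at h
    have h2 := congrArg Prod.snd h
    simp only [Prod.snd_add, Prod.snd_sub, Prod.snd_zero] at h2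
    funext k
    have h3 := congrFun h2 k
    simp only [Pi.add_apply, Pi.sub_apply, Pi.zero_apply, Matrix.vecMul_add,
      Matrix.vecMul_zero, Matrix.vecMul_vecMul] at h3 ⊢
    linear_combination -h3
  -- A commutes with B², hence A B² = 0
  have hcomm : A * (B * B) = B * B * A := by
    calc A * (B * B) = (A * B) * B := by rw [mul_assoc]
    _ = (B * A) * B := by rw [e2]
    _ = B * (A * B) := by rw [mul_assoc]
    _ = B * (B * A) := by rw [e2]
    _ = B * B * A := by rw [mul_assoc]
  have habb : A * (B * B) = 0 := by
    have : A * (B * B) + A * (B * B) = 0 := by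
      rw [hcomm]; rw [show A * B * B = B * B * A from by rw [mul_assoc, hcomm]] at e4
      simpa using e4
    exact double_zero this
  -- hence A·(ABA) = 0
  have haaba : A * (A * B * A) = 0 := by
    have : A * (A * B * A) + A * (A * B * A) = 0 := by
      have := congrArg (fun X => A * X) e3
      simp only [mul_add] at this
      rw [← this, habb]
    exact double_zero this
  -- multiply e1 by A on both sides to get A⁵ = 0
  have hA5 : A ^ 5 = 0 := by
    have k2 := congrArg (fun X => A * X * A) e1
    simp only [mul_add, add_mul, mul_assoc] at k2
    simp only [mul_assoc] at haaba
    rw [haaba] at k2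
    have hY : A * (A * (A * (A * A))) = 0 := by
      have := k2.symm
      simp only [add_zero, zero_add] at this
      exact double_zero this
    calc A ^ 5 = A * (A * (A * (A * A))) := by
          simp [pow_succ, mul_assoc]
    _ = 0 := hY
  -- nilpotency on a 3-dimensional space forces A³ = 0
  have hA3 : A ^ 3 = 0 := by
    have hn : IsNilpotent A := ⟨5, hA5⟩
    have hcp := Matrix.isNilpotent_charpoly_sub_pow_of_isNilpotent hn
    have hcp0 : A.charpoly = Polynomial.X ^ Fintype.card (Fin 3) := by
      have := hcp.eq_zero
      rwa [sub_eq_zero] at this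
    have := Matrix.aeval_self_charpoly A
    rw [hcp0] at this
    simpa [Fintype.card_fin] using this
  -- conclude AB = 0
  have hAB : A * B = 0 := by
    have hAAA : A * A * A = 0 := by
      rw [show A * A * A = A ^ 3 from by rw [pow_succ, pow_two]]
      exact hA3
    have hx : A * B + A * B + A * B = 0 := by rw [e1, hAAA, add_zero]
    ext j k
    have h' := congrFun (congrFun hx j) k
    simp only [Matrix.add_apply, Matrix.zero_apply] at h' ⊢
    linear_combination h' / 3
  have hBA : B * A = 0 := by rw [← e2]; exact hAB
  -- finish
  intro u
  constructor
  · rw [mul_eps_odd, mul_eps_odd, Matrix.vecMul_vecMul]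
    rw [show rmat μ 1 * rmat μ 0 = 0 from hBA]
    simp [Prod.ext_iff]
  · rw [mul_eps_odd, mul_eps_odd, Matrix.vecMul_vecMul]
    rw [show rmat μ 0 * rmat μ 1 = 0 from hAB]
    simp [Prod.ext_iff]

end
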